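/- Let Λ be the Kronecker algebra over an algebraically closed field k, i.e. the path algebra of the quiver with two vertices and two parallel arrows. For a finite subset I ⊂ k of cardinality n, the Kronecker representation P(I) given by (V(I) ⇉ V(I) + k·1) inside the generic representation (k(T) ⇉ k(T)) (with maps inclusion and multiplication by T), where V(I) is the span of {1/(T−λ) | λ ∈ I}, is an indecomposable preprojective module of dimension vector (n, n+1). -/

import Mathlib

universe u

variable (k : Type u) [Field k]

/-- A representation of the Kronecker quiver `0 ⇉ 1`: two vector spaces and two
linear maps. -/
structure KronRep where
  V : Type u
  W : Type u
  [addV : AddCommGroup V]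
  [addW : AddCommGroup W]
  [modV : Module k V]
  [modW : Module k W]
  a : V →ₗ[k] W
  b : V →ₗ[k] W

attribute [instance] KronRep.addV KronRep.addW KronRep.modV KronRep.modW

variable {k}

/-- A morphism of Kronecker representations. -/
@[ext]
structure KronHom (M N : KronRep k) where
  φ : M.V →ₗ[k] N.V
  ψ : M.W →ₗ[k] N.W
  comm_a : N.a.comp φ = ψ.comp M.a
  comm_b : N.b.comp φ = ψ.comp M.b

/-- The zero morphism. -/
def KronHom.zero (M N : KronRep k) : KronHom M N :=
  ⟨0, 0, by simp, by simp⟩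

/-- The identity morphism. -/
def KronHom.id (M : KronRep k) : KronHom M M :=
  ⟨LinearMap.id, LinearMap.id, by simp, by simp⟩

/-- `M` is the zero representation. -/
def KronRep.IsZeroRep (M : KronRep k) : Prop :=
  Subsingleton M.V ∧ Subsingleton M.W

/-- `M` is indecomposable: it is nonzero and its endomorphism ring has no nontrivial
idempotents. -/
def KronRep.Indecomposable (M : KronRep k) : Prop :=
  ¬ M.IsZeroRep ∧ ∀ e : KronHom M M,
    e.φ.comp e.φ = e.φ → e.ψ.comp e.ψ = e.ψ → e = KronHom.zero M M ∨ e = KronHom.id M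

/-- For Kronecker representations, the finite-dimensional indecomposable preprojective
modules are exactly the indecomposables of dimension vector `(n, n+1)`. -/
def KronRep.IsPreprojective (M : KronRep k) : Prop :=
  M.Indecomposable ∧ ∃ n : ℕ, Module.finrank k M.V = n ∧ Module.finrank k M.W = n + 1

variable (k)

/-- The subspace `V(I) ⊆ k(T)` spanned by the elements `1/(T - λ)`, `λ ∈ I`. -/
noncomputable def VI (I : Set k) : Submodule k (RatFunc k) :=
  Submodule.span k ((fun l : k => (RatFunc.X - RatFunc.C l)⁻¹) '' I)

/-- The subspace `V(I) + k·1 ⊆ k(T)`. -/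
noncomputable def WI (I : Set k) : Submodule k (RatFunc k) :=
  VI k I ⊔ Submodule.span k {1}

theorem mulX_mem (I : Set k) : ∀ v : RatFunc k, v ∈ VI k I →
    RatFunc.X * v ∈ WI k I := by
  intro v hv
  induction hv using Submodule.span_induction with
  | mem x hx =>
      obtain ⟨l, hl, rfl⟩ := hx
      have hne : (RatFunc.X - RatFunc.C l : RatFunc k) ≠ 0 := by
        have h1 : (RatFunc.X - RatFunc.C l : RatFunc k)
            = algebraMap (Polynomial k) (RatFunc k) (Polynomial.X - Polynomial.C l) := by
          simp [RatFunc.algebraMap_X, RatFunc.algebraMap_C]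
        rw [h1]
        exact RatFunc.algebraMap_ne_zero (Polynomial.X_sub_C_ne_zero l)
      have key : RatFunc.X * (RatFunc.X - RatFunc.C l)⁻¹
          = l • (RatFunc.X - RatFunc.C l)⁻¹ + 1 := by
        rw [Algebra.smul_def]
        field_simp
        rw [RatFunc.algebraMap_eq_C]
        ring
      rw [key]
      refine add_mem ?_ ?_
      · exact Submodule.mem_sup_left (Submodule.smul_mem _ _
          (Submodule.subset_span ⟨l, hl, rfl⟩))
      · exact Submodule.mem_sup_right (Submodule.subset_span rfl)
  | zero => simpa using (WI k I).zero_mem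
  | add x y hx hy ihx ihy => simpa [mul_add] using add_mem ihx ihy
  | smul c x hx ih => simpa [Algebra.mul_smul_comm] using (WI k I).smul_mem c ih

/-- Ringel's representation `P(I)`: the subrepresentation `(V(I) ⇉ V(I) + k·1)` of the
generic representation `(k(T) ⇉ k(T))`, whose maps are the inclusion and
multiplication by `T`. -/
noncomputable def Prep (I : Set k) : KronRep k where
  V := VI k I
  W := WI k I
  a := Submodule.inclusion le_sup_left
  b := LinearMap.codRestrict (WI k I)
    ((LinearMap.mulLeft k (RatFunc.X : RatFunc k)).comp (VI k I).subtype)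
    (fun v => mulX_mem k I v v.2)


section Aux

open Polynomial in
/-- abbreviation for the basic rational functions `1/(T-λ)`. -/
noncomputable def fr (l : k) : RatFunc k := (RatFunc.X - RatFunc.C l)⁻¹

lemma XsubC_eq (l : k) : (RatFunc.X - RatFunc.C l : RatFunc k)
    = algebraMap (Polynomial k) (RatFunc k) (Polynomial.X - Polynomial.C l) := by
  simp [RatFunc.algebraMap_X, RatFunc.algebraMap_C]

lemma XsubC_ne_zero (l : k) : (RatFunc.X - RatFunc.C l : RatFunc k) ≠ 0 := by
  rw [XsubC_eq]
  exact RatFunc.algebraMap_ne_zero (Polynomial.X_sub_C_ne_zero l)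

lemma fr_injective : Function.Injective (fr k) := by
  intro a b h
  have h2 : (RatFunc.X - RatFunc.C a : RatFunc k) = RatFunc.X - RatFunc.C b :=
    inv_injective h
  have h3 : (RatFunc.C a : RatFunc k) = RatFunc.C b := by
    rwa [sub_right_inj] at h2
  have h4 := congrArg (fun x : RatFunc k => x.num.coeff 0) h3
  simpa [RatFunc.num_C] using h4

lemma algebraMap_smul' (c : k) (x : Polynomial k) :
    algebraMap (Polynomial k) (RatFunc k) (c • x)
      = c • algebraMap (Polynomial k) (RatFunc k) x := by
  rw [Polynomial.smul_eq_C_mul, map_mul, RatFunc.smul_eq_C_mul, RatFunc.algebraMap_C]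

/-- The key linear-independence statement: the functions `1/(T-λ)` together with `1`
are linearly independent. -/
lemma indep_aux (s : Finset k) (c : k → k) (d : k)
    (h : ∑ l ∈ s, c l • fr k l + d • (1 : RatFunc k) = 0) :
    (∀ l ∈ s, c l = 0) ∧ d = 0 := by
  classical
  set A := algebraMap (Polynomial k) (RatFunc k) with hA
  set p : Polynomial k := ∏ l ∈ s, (Polynomial.X - Polynomial.C l) with hp
  set q : k → Polynomial k :=
    fun l => ∏ m ∈ s.erase l, (Polynomial.X - Polynomial.C m) with hq
  have hpne : p ≠ 0 := by
    rw [hp]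
    exact Finset.prod_ne_zero_iff.mpr fun l _ => Polynomial.X_sub_C_ne_zero l
  have hfrp : ∀ l ∈ s, fr k l * A p = A (q l) := by
    intro l hl
    have h1 : p = (Polynomial.X - Polynomial.C l) * q l :=
      (Finset.mul_prod_erase s _ hl).symm
    rw [h1, map_mul, ← mul_assoc,
      show A (Polynomial.X - Polynomial.C l) = RatFunc.X - RatFunc.C l from
        (XsubC_eq k l).symm,
      fr, inv_mul_cancel₀ (XsubC_ne_zero k l), one_mul]
  have key : A (∑ l ∈ s, c l • q l + d • p) = 0 := by
    have h2 := congrArg (· * A p) h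
    simp only [zero_mul, add_mul, Finset.sum_mul, smul_mul_assoc, one_mul] at h2
    rw [map_add, map_sum, algebraMap_smul']
    rw [← h2]
    congr 1
    refine Finset.sum_congr rfl fun l hl => ?_
    rw [algebraMap_smul', hfrp l hl]
  have hP0 : ∑ l ∈ s, c l • q l + d • p = 0 := by
    by_contra hP
    exact RatFunc.algebraMap_ne_zero hP key
  have hc : ∀ l ∈ s, c l = 0 := by
    intro l0 hl0
    have hev := congrArg (Polynomial.eval l0) hP0
    have hpe : p.eval l0 = 0 := by
      rw [hp, Polynomial.eval_prod]
      exact Finset.prod_eq_zero hl0 (by simp)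
    have hqe : ∀ l ∈ s, l ≠ l0 → (c l • q l).eval l0 = 0 := by
      intro l hl hne
      have : (q l).eval l0 = 0 := by
        rw [hq, Polynomial.eval_prod]
        exact Finset.prod_eq_zero (Finset.mem_erase.mpr ⟨Ne.symm hne, hl0⟩) (by simp)
      simp [this]
    have hql0 : (q l0).eval l0 ≠ 0 := by
      rw [hq, Polynomial.eval_prod]
      refine Finset.prod_ne_zero_iff.mpr fun m hm => ?_
      have : m ≠ l0 := (Finset.mem_erase.mp hm).1
      simp [sub_ne_zero.mpr (Ne.symm this)]
    rw [Polynomial.eval_add, Polynomial.eval_finset_sum, Polynomial.eval_smul,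
      Polynomial.eval_zero, smul_eq_mul, hpe, mul_zero, add_zero,
      Finset.sum_eq_single l0 hqe (fun h => absurd hl0 h)] at hev
    rw [Polynomial.eval_smul, smul_eq_mul] at hev
    exact (mul_eq_zero.mp hev).resolve_right hql0
  refine ⟨hc, ?_⟩
  rw [Finset.sum_eq_zero (fun l hl => by rw [hc l hl, zero_smul]), zero_add] at hP0
  exact (smul_eq_zero.mp hP0).resolve_right hpne

lemma mem_VI (s : Finset k) (v : RatFunc k) (hv : v ∈ VI k ↑s) :
    ∃ c : k → k, v = ∑ l ∈ s, c l • fr k l := by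
  classical
  have himg : ((fun l : k => (RatFunc.X - RatFunc.C l)⁻¹) '' ↑s : Set (RatFunc k))
      = ↑(s.image (fr k)) := by
    rw [Finset.coe_image]; rfl
  rw [VI, himg] at hv
  obtain ⟨f, -, hf⟩ := Submodule.mem_span_finset.mp hv
  refine ⟨fun l => f (fr k l), ?_⟩
  rw [← hf, Finset.sum_image (fun a _ b _ h => fr_injective k h)]

lemma mem_WI (s : Finset k) (w : RatFunc k) (hw : w ∈ WI k ↑s) :
    ∃ (c : k → k) (d : k), w = ∑ l ∈ s, c l • fr k l + d • (1 : RatFunc k) := by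
  obtain ⟨v, hv, u, hu, huv⟩ := Submodule.mem_sup.mp hw
  obtain ⟨c, hc⟩ := mem_VI k s v hv
  obtain ⟨d, hd⟩ := Submodule.mem_span_singleton.mp hu
  exact ⟨c, d, by rw [← huv, hc, hd]⟩

lemma linIndep_fr (s : Finset k) :
    LinearIndependent k (fun l : ↥s => fr k l.val) := by
  classical
  rw [Fintype.linearIndependent_iff]
  intro g hg
  set g' : k → k := fun l => if h : l ∈ s then g ⟨l, h⟩ else 0 with hg'
  have hsum : ∑ l ∈ s, g' l • fr k l = ∑ i : ↥s, g i • fr k i.val := by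
    rw [Finset.univ_eq_attach, ← Finset.sum_attach s (fun l => g' l • fr k l)]
    refine Finset.sum_congr rfl fun x _ => ?_
    simp [hg', x.2]
  have h0 : ∑ l ∈ s, g' l • fr k l + (0 : k) • (1 : RatFunc k) = 0 := by
    rw [zero_smul, add_zero, hsum, hg]
  have hz := (indep_aux k s g' 0 h0).1
  intro i
  have h2 := hz i.1 i.2
  simpa [hg', i.2] using h2

lemma VI_eq_span_range (s : Finset k) :
    VI k ↑s = Submodule.span k (Set.range (fun l : ↥s => fr k l.val)) := by
  rw [VI]
  congr 1
  ext x
  constructor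
  · rintro ⟨l, hl, rfl⟩; exact ⟨⟨l, hl⟩, rfl⟩
  · rintro ⟨l, rfl⟩; exact ⟨l.1, l.2, rfl⟩

lemma finrank_VI (s : Finset k) : Module.finrank k (VI k ↑s) = s.card := by
  rw [VI_eq_span_range, finrank_span_eq_card (linIndep_fr k s), Fintype.card_coe]

/-- indexing family for `W(I)`. -/
noncomputable def frW (s : Finset k) : Option ↥s → RatFunc k :=
  fun o => Option.elim o 1 (fun l => fr k l.val)

lemma WI_eq_span_range (s : Finset k) :
    WI k ↑s = Submodule.span k (Set.range (frW k s)) := by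
  have hr : Set.range (frW k s)
      = Set.range (fun l : ↥s => fr k l.val) ∪ {1} := by
    ext x
    constructor
    · rintro ⟨o, rfl⟩
      cases o with
      | none => right; rfl
      | some l => left; exact ⟨l, rfl⟩
    · rintro (⟨l, rfl⟩ | h)
      · exact ⟨some l, rfl⟩
      · exact ⟨none, h.symm ▸ rfl⟩
  rw [WI, VI_eq_span_range, hr, Submodule.span_union]

lemma linIndep_frW (s : Finset k) : LinearIndependent k (frW k s) := by
  classical
  rw [Fintype.linearIndependent_iff]
  intro g hg
  set g' : k → k := fun l => if h : l ∈ s then g (some ⟨l, h⟩) else 0 with hg'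
  have hsum : ∑ l ∈ s, g' l • fr k l = ∑ i : ↥s, g (some i) • fr k i.val := by
    rw [Finset.univ_eq_attach, ← Finset.sum_attach s (fun l => g' l • fr k l)]
    refine Finset.sum_congr rfl fun x _ => ?_
    simp [hg', x.2]
  have h0 : ∑ l ∈ s, g' l • fr k l + g none • (1 : RatFunc k) = 0 := by
    rw [hsum, ← hg, Fintype.sum_option]
    simp [frW, add_comm]
  obtain ⟨hz, hd⟩ := indep_aux k s g' (g none) h0
  intro o
  cases o with
  | none => exact hd
  | some i =>
      have h2 := hz i.1 i.2
      simpa [hg', i.2] using h2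

lemma finrank_WI (s : Finset k) : Module.finrank k (WI k ↑s) = s.card + 1 := by
  rw [WI_eq_span_range, finrank_span_eq_card (linIndep_frW k s), Fintype.card_option,
    Fintype.card_coe]

end Aux


section Endo

/-- The basis vectors of `V(I)` as elements of the submodule. -/
noncomputable def Fv (s : Finset k) (l : k) (hl : l ∈ s) : VI k (↑s : Set k) :=
  ⟨fr k l, Submodule.subset_span ⟨l, hl, rfl⟩⟩

/-- The element `1` of `W(I)`. -/
noncomputable def oneW (s : Finset k) : WI k (↑s : Set k) :=
  ⟨1, Submodule.mem_sup_right (Submodule.subset_span rfl)⟩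

lemma hXfr (l m : k) : (RatFunc.X - RatFunc.C l) * fr k m
    = (m - l) • fr k m + 1 := by
  rw [RatFunc.smul_eq_C_mul, fr, map_sub]
  have h := XsubC_ne_zero k m
  field_simp
  ring

lemma endo_scalar (s : Finset k) (φ : VI k (↑s : Set k) →ₗ[k] VI k (↑s : Set k))
    (ψ : WI k (↑s : Set k) →ₗ[k] WI k (↑s : Set k))
    (ha : ∀ v : VI k (↑s : Set k),
      (ψ ⟨v.1, Submodule.mem_sup_left v.2⟩ : RatFunc k) = (φ v : RatFunc k))
    (hb : ∀ v : VI k (↑s : Set k),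
      (ψ ⟨RatFunc.X * v.1, mulX_mem k (↑s : Set k) v.1 v.2⟩ : RatFunc k)
        = RatFunc.X * (φ v : RatFunc k)) :
    ∃ d : k, (∀ v, φ v = d • v) ∧ (∀ w, ψ w = d • w) := by
  classical
  obtain ⟨dd, d₀, hw⟩ := mem_WI k s (ψ (oneW k s) : RatFunc k) (ψ (oneW k s)).2
  have step : ∀ l (hl : l ∈ s), ∃ c : k → k,
      ((φ (Fv k s l hl) : RatFunc k) = ∑ m ∈ s, c m • fr k m)
      ∧ (∀ m ∈ s, dd m = c m * (m - l)) ∧ d₀ = ∑ m ∈ s, c m := by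
    intro l hl
    obtain ⟨c, hc⟩ := mem_VI k s (φ (Fv k s l hl) : RatFunc k) (φ (Fv k s l hl)).2
    have hbl := hb (Fv k s l hl)
    have hXl : RatFunc.X * fr k l = l • fr k l + 1 := by
      have h := hXfr k 0 l
      rw [map_zero, sub_zero, sub_zero] at h
      exact h
    have harg : (⟨RatFunc.X * (Fv k s l hl).1,
          mulX_mem k (↑s : Set k) (Fv k s l hl).1 (Fv k s l hl).2⟩ : WI k (↑s : Set k))
        = l • (⟨(Fv k s l hl).1, Submodule.mem_sup_left (Fv k s l hl).2⟩ : WI k (↑s : Set k))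
          + oneW k s := by
      apply Subtype.ext
      show RatFunc.X * (Fv k s l hl).1 = l • (Fv k s l hl).1 + 1
      exact hXl
    rw [harg, map_add, map_smul] at hbl
    have hval : l • (φ (Fv k s l hl) : RatFunc k) + (ψ (oneW k s) : RatFunc k)
        = RatFunc.X * (φ (Fv k s l hl) : RatFunc k) := by
      have hbl' : l • (ψ (⟨(Fv k s l hl).1, Submodule.mem_sup_left (Fv k s l hl).2⟩
            : WI k (↑s : Set k)) : RatFunc k) + (ψ (oneW k s) : RatFunc k)
          = RatFunc.X * (φ (Fv k s l hl) : RatFunc k) := by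
        exact_mod_cast hbl
      rw [ha (Fv k s l hl)] at hbl'
      exact hbl'
    have hkey : (ψ (oneW k s) : RatFunc k)
        = (RatFunc.X - RatFunc.C l) * (φ (Fv k s l hl) : RatFunc k) := by
      rw [sub_mul, ← RatFunc.smul_eq_C_mul, eq_sub_iff_add_eq, add_comm]
      exact hval
    have expand : (RatFunc.X - RatFunc.C l) * ∑ m ∈ s, c m • fr k m
        = ∑ m ∈ s, (c m * (m - l)) • fr k m + (∑ m ∈ s, c m) • (1 : RatFunc k) := by
      rw [Finset.mul_sum, Finset.sum_smul, ← Finset.sum_add_distrib]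
      refine Finset.sum_congr rfl fun m hm => ?_
      rw [mul_smul_comm, hXfr k l m, smul_add, smul_smul]
    have heq : ∑ m ∈ s, dd m • fr k m + d₀ • (1 : RatFunc k)
        = ∑ m ∈ s, (c m * (m - l)) • fr k m + (∑ m ∈ s, c m) • (1 : RatFunc k) := by
      rw [← hw, hkey, hc, expand]
    have hzero : ∑ m ∈ s, (dd m - c m * (m - l)) • fr k m
        + (d₀ - ∑ m ∈ s, c m) • (1 : RatFunc k) = 0 := by
      have h0 := sub_eq_zero.mpr heq
      calc ∑ m ∈ s, (dd m - c m * (m - l)) • fr k m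
            + (d₀ - ∑ m ∈ s, c m) • (1 : RatFunc k)
          = (∑ m ∈ s, dd m • fr k m + d₀ • (1 : RatFunc k))
            - (∑ m ∈ s, (c m * (m - l)) • fr k m
              + (∑ m ∈ s, c m) • (1 : RatFunc k)) := by
            simp only [sub_smul, Finset.sum_sub_distrib]
            abel
        _ = 0 := h0
    obtain ⟨h1, h2⟩ := indep_aux k s _ _ hzero
    exact ⟨c, hc, fun m hm => sub_eq_zero.mp (h1 m hm), (sub_eq_zero.mp h2).symm ▸ rfl⟩
  have hdd : ∀ m ∈ s, dd m = 0 := by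
    intro m hm
    obtain ⟨c, -, h2, -⟩ := step m hm
    simpa using h2 m hm
  have hψone : ψ (oneW k s) = d₀ • oneW k s := by
    apply Subtype.ext
    show (ψ (oneW k s) : RatFunc k) = d₀ • (1 : RatFunc k)
    rw [hw, Finset.sum_eq_zero (fun m hm => by rw [hdd m hm, zero_smul]), zero_add]
  have hφF : ∀ l (hl : l ∈ s), φ (Fv k s l hl) = d₀ • Fv k s l hl := by
    intro l hl
    obtain ⟨c, hc, h2, h3⟩ := step l hl
    have hcm : ∀ m ∈ s, m ≠ l → c m = 0 := by
      intro m hm hne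
      have h4 := h2 m hm
      rw [hdd m hm] at h4
      rcases mul_eq_zero.mp h4.symm with h5 | h5
      · exact h5
      · exact absurd (sub_eq_zero.mp h5) hne
    have hd0 : d₀ = c l := by
      rw [h3, Finset.sum_eq_single l (fun m hm hne => hcm m hm hne)
        (fun h => absurd hl h)]
    apply Subtype.ext
    show (φ (Fv k s l hl) : RatFunc k) = d₀ • (Fv k s l hl).1
    rw [hc, Finset.sum_eq_single l (fun m hm hne => by rw [hcm m hm hne, zero_smul])
      (fun h => absurd hl h), hd0]
    rfl
  refine ⟨d₀, ?_, ?_⟩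
  · intro v
    obtain ⟨c, hc⟩ := mem_VI k s v.1 v.2
    have hv : v = ∑ l ∈ s.attach, c l.1 • Fv k s l.1 l.2 := by
      apply Subtype.ext
      rw [hc]
      rw [show ((∑ l ∈ s.attach, c l.1 • Fv k s l.1 l.2 : VI k (↑s : Set k)) : RatFunc k)
          = ∑ l ∈ s.attach, c l.1 • fr k l.1 by
        simp [Fv]]
      rw [Finset.sum_attach s (fun l => c l • fr k l)]
    rw [hv, map_sum, Finset.smul_sum]
    refine Finset.sum_congr rfl fun x _ => ?_
    rw [map_smul, hφF x.1 x.2, smul_comm]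
  · intro w
    obtain ⟨c, d', hcw⟩ := mem_WI k s w.1 w.2
    have hψF : ∀ l (hl : l ∈ s),
        ψ ⟨(Fv k s l hl).1, Submodule.mem_sup_left (Fv k s l hl).2⟩
          = d₀ • ⟨(Fv k s l hl).1, Submodule.mem_sup_left (Fv k s l hl).2⟩ := by
      intro l hl
      apply Subtype.ext
      rw [show ((d₀ • (⟨(Fv k s l hl).1, Submodule.mem_sup_left (Fv k s l hl).2⟩
          : WI k (↑s : Set k)) : WI k (↑s : Set k)) : RatFunc k)
          = d₀ • (Fv k s l hl).1 from rfl]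
      rw [ha (Fv k s l hl), hφF l hl]
      rfl
    have hwdec : w = ∑ l ∈ s.attach,
        c l.1 • (⟨(Fv k s l.1 l.2).1, Submodule.mem_sup_left (Fv k s l.1 l.2).2⟩ : WI k (↑s : Set k))
        + d' • oneW k s := by
      apply Subtype.ext
      rw [hcw]
      rw [show ((∑ l ∈ s.attach,
          c l.1 • (⟨(Fv k s l.1 l.2).1, Submodule.mem_sup_left (Fv k s l.1 l.2).2⟩
            : WI k (↑s : Set k)) + d' • oneW k s : WI k (↑s : Set k)) : RatFunc k)
          = ∑ l ∈ s.attach, c l.1 • fr k l.1 + d' • (1 : RatFunc k) by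
        simp [Fv, oneW]]
      rw [Finset.sum_attach s (fun l => c l • fr k l)]
    rw [hwdec, map_add, map_sum, map_smul, hψone, smul_add, Finset.smul_sum]
    congr 1
    · refine Finset.sum_congr rfl fun x _ => ?_
      rw [map_smul, hψF x.1 x.2, smul_comm]
    · rw [smul_comm]

end Endo

/-- For a finite subset `I ⊆ k` of cardinality `n`, the representation `P(I)` is an
indecomposable preprojective Kronecker module of dimension vector `(n, n+1)`. -/
theorem Prep_indecomposable_preprojective_of_finite
    [IsAlgClosed k] (I : Set k) (n : ℕ) (hfin : I.Finite) (hcard : I.ncard = n) :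
    (Prep k I).Indecomposable ∧ (Prep k I).IsPreprojective ∧
      Module.finrank k (Prep k I).V = n ∧ Module.finrank k (Prep k I).W = n + 1 := by
  classical
  have hI : I = ↑hfin.toFinset := (Set.Finite.coe_toFinset hfin).symm
  set s : Finset k := hfin.toFinset with hs
  have hcard' : s.card = n := by rw [← hcard, hI, Set.ncard_coe_finset]
  rw [hI]
  have hV : Module.finrank k (Prep k (↑s : Set k)).V = n := by
    have h := finrank_VI k s
    rw [hcard'] at h
    exact h
  have hW : Module.finrank k (Prep k (↑s : Set k)).W = n + 1 := by
    have h := finrank_WI k s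
    rw [hcard'] at h
    exact h
  have hne : ¬ (Prep k (↑s : Set k)).IsZeroRep := by
    rintro ⟨-, hW0⟩
    have h1 : oneW k s = (0 : WI k (↑s : Set k)) := @Subsingleton.elim _ hW0 _ _
    have h2 := congrArg Subtype.val h1
    simp [oneW] at h2
  have hInd : (Prep k (↑s : Set k)).Indecomposable := by
    refine ⟨hne, fun e hφ2 hψ2 => ?_⟩
    have hacomm : ∀ v : VI k (↑s : Set k),
        (e.ψ ⟨v.1, Submodule.mem_sup_left v.2⟩).1 = (e.φ v).1 := by
      intro v
      have h := LinearMap.congr_fun e.comm_a v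
      exact (congrArg Subtype.val h).symm
    have hbcomm : ∀ v : VI k (↑s : Set k),
        (e.ψ ⟨RatFunc.X * v.1, mulX_mem k (↑s : Set k) v.1 v.2⟩).1
          = RatFunc.X * (e.φ v).1 := by
      intro v
      have h := LinearMap.congr_fun e.comm_b v
      exact (congrArg Subtype.val h).symm
    obtain ⟨d, hφd, hψd⟩ := endo_scalar k s e.φ e.ψ hacomm hbcomm
    have hidem : d * d = d := by
      have h := LinearMap.congr_fun hψ2 (oneW k s)
      change e.ψ (e.ψ (oneW k s)) = e.ψ (oneW k s) at h
      have hval : (d * d) • oneW k s = d • oneW k s := by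
        exact (smul_smul d d (oneW k s)).symm.trans
          ((congrArg (fun x : WI k (↑s : Set k) => d • x) (hψd (oneW k s))).symm.trans
            ((hψd (e.ψ (oneW k s))).symm.trans (h.trans (hψd (oneW k s)))))
      have h2 := congrArg Subtype.val hval
      have h3 : (d * d) • (1 : RatFunc k) = d • (1 : RatFunc k) := h2
      have h4 : (d * d - d) • (1 : RatFunc k) = 0 := by
        rw [sub_smul, h3, sub_self]
      rcases smul_eq_zero.mp h4 with h5 | h5
      · exact sub_eq_zero.mp h5
      · exact absurd h5 one_ne_zero
    have hd01 : d = 0 ∨ d = 1 := by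
      have h : d * (d - 1) = 0 := by linear_combination hidem
      rcases mul_eq_zero.mp h with h5 | h5
      · exact Or.inl h5
      · exact Or.inr (sub_eq_zero.mp h5)
    rcases hd01 with hd | hd
    · left
      refine KronHom.ext ?_ ?_
      · refine LinearMap.ext fun v => ?_
        have h := hφd v
        rw [hd] at h
        exact h.trans (zero_smul k _)
      · refine LinearMap.ext fun w => ?_
        have h := hψd w
        rw [hd] at h
        exact h.trans (zero_smul k _)
    · right
      refine KronHom.ext ?_ ?_
      · refine LinearMap.ext fun v => ?_
        have h := hφd v
        rw [hd] at h
        exact h.trans (one_smul k _)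
      · refine LinearMap.ext fun w => ?_
        have h := hψd w
        rw [hd] at h
        exact h.trans (one_smul k _)
  exact ⟨hInd, ⟨hInd, n, hV, hW⟩, hV, hW⟩
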